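/- arXiv:2510.09373 — 11 statements merged into one kernel-verified Lean document; each statement's English description precedes it below -/
import Mathlib

section
/- Let s be a duplicate-free list of nodes whose first element is α and whose last element is ω, and let N̂ be a set of NotBetween triples such that every (v1, v2, v3) ∈ N̂ satisfies v1 ≺_s v3 and such that s itself violates no triple of N̂. Then D_S(s) ∩ D_N(N̂) equals the set of sequences S ∈ P such that s is a subsequence of S and, for every element v of S that does not occur in s, the pair (prev(v, s, S), v) does not belong to the forbidden-insertion set F(s, N̂). -/
variable {V : Type*}

/-- `a` directly-or-later precedes `b` in `s`: `[a, b]` is a sublist of `s`. -/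
def prec (a b : V) (s : List V) : Prop := [a, b].Sublist s

/-- `a ⪯_s b`: `a = b` or `a ≺_s b`. -/
def preceq (a b : V) (s : List V) : Prop := a = b ∨ prec a b s

/-- `S` violates the NotBetween triple `(v1, v2, v3)`. -/
def violates (S : List V) (t : V × V × V) : Prop := [t.1, t.2.1, t.2.2].Sublist S

/-- A sequence: duplicate-free list with first element `α` and last element `ω`. -/
def IsSeq (a w : V) (S : List V) : Prop :=
  S.Nodup ∧ S.head? = some a ∧ S.getLast? = some w

/-- The set of all sequences from `α` to `ω`. -/
def seqP (a w : V) : Set (List V) := {S | IsSeq a w S}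

/-- Subsequence subdomain. -/
def DS (a w : V) (s : List V) : Set (List V) := {S ∈ seqP a w | s.Sublist S}

/-- NotBetween subdomain. -/
def DN (a w : V) (N : Set (V × V × V)) : Set (List V) :=
  {S ∈ seqP a w | ∀ t ∈ N, ¬ violates S t}

/-- Forbidden insertions `F(s, N̂)`. -/
def Forb (s : List V) (N : Set (V × V × V)) : Set (V × V) :=
  {p | ∃ t ∈ N, t.2.1 = p.2 ∧ preceq t.1 p.1 s ∧ prec p.1 t.2.2 s}

/-- The prefix of `S` strictly before `v`, filtered to elements of `s`. -/
def prevList [DecidableEq V] (v : V) (s S : List V) : List V :=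
  (S.takeWhile (· ≠ v)).filter (· ∈ s)

/-- `prev(v, s, S)`: `v` itself if `v` occurs in `s`, otherwise the last element of `s`
occurring before `v` in `S`. -/
def prev [DecidableEq V] (v : V) (s S : List V) : V :=
  if v ∈ s then v else (prevList v s S).getLastD v

lemma pair_trichotomy {x y : V} {l : List V} (hx : x ∈ l) (hy : y ∈ l) (hxy : x ≠ y) :
    [x, y].Sublist l ∨ [y, x].Sublist l := by
  induction l with
  | nil => simp at hx
  | cons a t ih =>
    rcases List.mem_cons.mp hx with rfl | hx'
    · have hyt : y ∈ t := (List.mem_cons.mp hy).resolve_left (fun h => hxy h.symm)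
      exact Or.inl ((List.singleton_sublist.mpr hyt).cons₂ x)
    · rcases List.mem_cons.mp hy with rfl | hy'
      · exact Or.inr ((List.singleton_sublist.mpr hx').cons₂ y)
      · rcases ih hx' hy' with h | h
        · exact Or.inl (h.cons a)
        · exact Or.inr (h.cons a)

lemma pair_antisymm {x y : V} : ∀ {l : List V}, l.Nodup → [x, y].Sublist l → [y, x].Sublist l → False := by
  intro l
  induction l with
  | nil => intro _ hxy _; simp at hxy
  | cons a t ih =>
    intro h hxy hyx
    cases hxy with
    | cons _ h1 =>
      cases hyx with
      | cons _ h2 => exact ih (List.nodup_cons.mp h).2 h1 h2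
      | cons_cons _ h2 => exact (List.nodup_cons.mp h).1 (h1.subset (by simp))
    | cons_cons _ h1 =>
      cases hyx with
      | cons _ h2 => exact (List.nodup_cons.mp h).1 (h2.subset (by simp))
      | cons_cons _ h2 => exact (List.nodup_cons.mp h).1 (h2.subset (by simp))

lemma chain3 {x y z : V} : ∀ {l : List V}, l.Nodup → [x, y].Sublist l → [y, z].Sublist l →
    [x, y, z].Sublist l := by
  intro l
  induction l with
  | nil => intro _ h; simp at h
  | cons a t ih =>
    intro h hxy hyz
    cases hxy with
    | cons _ h1 =>
      cases hyz with
      | cons _ h2 => exact (ih (List.nodup_cons.mp h).2 h1 h2).cons a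
      | cons_cons _ h2 => exact absurd (h1.subset (by simp)) (List.nodup_cons.mp h).1
    | cons_cons _ h1 =>
      cases hyz with
      | cons _ h2 => exact h2.cons₂ x
      | cons_cons _ h2 => exact absurd (h1.subset (by simp)) (List.nodup_cons.mp h).1

lemma pair_transfer {s S : List V} (hsub : s.Sublist S) (hS : S.Nodup) {x y : V}
    (hx : x ∈ s) (hy : y ∈ s) (h : [x, y].Sublist S) : [x, y].Sublist s := by
  have hxy : x ≠ y := by
    rintro rfl
    exact (List.nodup_cons.mp (h.nodup hS)).1 (by simp)
  rcases pair_trichotomy hx hy hxy with h' | h'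
  · exact h'
  · exact (pair_antisymm hS h (h'.trans hsub)).elim

lemma getLastD_indep (b : V) (u : List V) (d d' : V) :
    (b :: u).getLastD d = (b :: u).getLastD d' := by
  induction u generalizing b with
  | nil => simp
  | cons c w _ => simp only [List.getLastD_cons]

lemma getLastD_mem {l : List V} (h : l ≠ []) (d : V) : l.getLastD d ∈ l := by
  induction l with
  | nil => exact absurd rfl h
  | cons a t ih =>
    cases t with
    | nil => simp
    | cons b u =>
      rw [List.getLastD_cons]
      exact List.mem_cons_of_mem a (ih (by simp))

lemma last_facts {d : V} : ∀ {l : List V} {x : V}, x ∈ l →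
    x = l.getLastD d ∨ [x, l.getLastD d].Sublist l := by
  intro l
  induction l with
  | nil => simp
  | cons a t ih =>
    intro x hx
    cases t with
    | nil => simp at hx ⊢; exact hx
    | cons b u =>
      rw [List.getLastD_cons, getLastD_indep b u a d]
      rcases List.mem_cons.mp hx with rfl | hx'
      · exact Or.inr ((List.singleton_sublist.mpr (getLastD_mem (by simp) d)).cons₂ x)
      · rcases ih hx' with h | h
        · exact Or.inl h
        · exact Or.inr (h.cons a)


/-- `prevList` lemmas -/
lemma takeWhile_decomp {v : V} [DecidableEq V] {T R : List V} (hT : v ∉ T) :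
    ((T ++ v :: R).takeWhile (· ≠ v)) = T := by
  induction T with
  | nil => simp [List.takeWhile_cons]
  | cons b T ih =>
    simp only [List.mem_cons, not_or] at hT
    have hb : b ≠ v := fun h => hT.1 h.symm
    rw [List.cons_append, List.takeWhile_cons, if_pos (by simpa using hb), ih hT.2]

lemma prevList_sublist [DecidableEq V] (v : V) (s S : List V) :
    (prevList v s S).Sublist S :=
  List.filter_sublist.trans (List.takeWhile_sublist _)

lemma mem_prevList [DecidableEq V] {v : V} {s S : List V} (hS : S.Nodup) (hv : v ∈ S) {z : V} :
    z ∈ prevList v s S ↔ z ∈ s ∧ [z, v].Sublist S := by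
  obtain ⟨T, R, rfl⟩ := List.append_of_mem hv
  have hvT : v ∉ T := fun h =>
    (List.nodup_append'.mp hS).2.2 h List.mem_cons_self
  rw [prevList, takeWhile_decomp hvT]
  simp only [List.mem_filter, decide_eq_true_iff]
  constructor
  · rintro ⟨hzT, hzs⟩
    refine ⟨hzs, ?_⟩
    have : ([z] ++ [v]).Sublist (T ++ v :: R) :=
      List.Sublist.append (List.singleton_sublist.mpr hzT)
        ((List.nil_sublist R).cons₂ v)
    simpa using this
  · rintro ⟨hzs, hzv⟩
    refine ⟨?_, hzs⟩
    have hzmem : z ∈ T ++ v :: R := hzv.subset (by simp)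
    have hzne : z ≠ v := by
      rintro rfl
      exact (List.nodup_cons.mp (hzv.nodup hS)).1 (by simp)
    rcases List.mem_append.mp hzmem with h | h
    · exact h
    · exfalso
      have hzR : z ∈ R := (List.mem_cons.mp h).resolve_left hzne
      have : [v, z].Sublist (T ++ v :: R) :=
        ((List.singleton_sublist.mpr hzR).cons₂ v).trans (List.sublist_append_right T _)
      exact pair_antisymm hS hzv this

lemma prev_spec [DecidableEq V] {v : V} {s S : List V} (hS : S.Nodup) (hv : v ∈ S)
    (hvs : v ∉ s) {z : V} (hz : z ∈ prevList v s S) :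
    prev v s S ∈ s ∧ [prev v s S, v].Sublist S ∧
      (z = prev v s S ∨ [z, prev v s S].Sublist S) := by
  have hne : prevList v s S ≠ [] := fun h => by simp [h] at hz
  have hp : prev v s S = (prevList v s S).getLastD v := by rw [prev, if_neg hvs]
  have hmem : prev v s S ∈ prevList v s S := by rw [hp]; exact getLastD_mem hne v
  have h1 := (mem_prevList hS hv).mp hmem
  refine ⟨h1.1, h1.2, ?_⟩
  rcases last_facts (d := v) hz with h | h
  · exact Or.inl (by rw [hp]; exact h)
  · exact Or.inr (by rw [hp]; exact h.trans (prevList_sublist v s S))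

theorem domain_encoding [DecidableEq V] (a w : V) (haw : a ≠ w)
    (s : List V) (hs : IsSeq a w s) (N : Set (V × V × V))
    (hN : ∀ t ∈ N, prec t.1 t.2.2 s)
    (hok : ∀ t ∈ N, ¬ violates s t) :
    DS a w s ∩ DN a w N =
      {S | S ∈ seqP a w ∧ s.Sublist S ∧
        ∀ v ∈ S, v ∉ s → (prev v s S, v) ∉ Forb s N} := by
  ext S
  simp only [Set.mem_inter_iff, DS, DN, Set.mem_setOf_eq, Set.mem_sep_iff]
  constructor
  · rintro ⟨⟨hP, hsub⟩, -, hvio⟩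
    have hS : S.Nodup := hP.1
    have hsnd : s.Nodup := hsub.nodup hS
    refine ⟨hP, hsub, ?_⟩
    rintro v hv hvs ⟨⟨v1, v2, v3⟩, htN, ht2, hpre, hprec⟩
    simp only at ht2 hpre hprec
    have hv13 : [v1, v3].Sublist s := hN _ htN
    have hv1s : v1 ∈ s := hv13.subset (by simp)
    have hv3s : v3 ∈ s := hv13.subset (by simp)
    -- prevList is nonempty
    by_cases hne : prevList v s S = []
    · have hp : prev v s S = v := by rw [prev, if_neg hvs, hne]; rfl
      rcases hpre with h | h
      · rw [hp] at h; exact hvs (h ▸ hv1s)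
      · rw [hp] at h; exact hvs (h.subset (by simp))
    · obtain ⟨z, hz⟩ := List.exists_mem_of_ne_nil _ hne
      obtain ⟨hps, hpv, -⟩ := prev_spec hS hv hvs hz
      set p := prev v s S with hpdef
      -- [p, v3] in S
      have hpv3S : [p, v3].Sublist S := hprec.trans hsub
      have hv3S : v3 ∈ S := hpv3S.subset (by simp)
      have hvv3 : v ≠ v3 := fun h => hvs (h ▸ hv3s)
      -- v3 comes after v in S
      have hvv3S : [v, v3].Sublist S := by
        rcases pair_trichotomy hv hv3S hvv3 with h | h
        · exact h
        · exfalso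
          have hv3p : v3 ∈ prevList v s S := (mem_prevList hS hv).mpr ⟨hv3s, h⟩
          obtain ⟨-, -, hle⟩ := prev_spec hS hv hvs hv3p
          rcases hle with h' | h'
          · have : [p, v3].Nodup := hpv3S.nodup hS
            exact (List.nodup_cons.mp this).1 (by simp [h', hpdef])
          · exact pair_antisymm hS hpv3S h'
      -- build [v1, v, v3] sublist of S
      have hv1v : [v1, v].Sublist S := by
        rcases hpre with h | h
        · exact h ▸ hpv
        · have h' : [v1, p, v].Sublist S := chain3 hS (h.trans hsub) hpv
          exact (((List.Sublist.refl [v]).cons p).cons₂ v1).trans h'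
      have h3 : [v1, v, v3].Sublist S := chain3 hS hv1v hvv3S
      exact hvio _ htN (show [v1, v2, v3].Sublist S from ht2 ▸ h3)
  · rintro ⟨hP, hsub, hforb⟩
    have hS : S.Nodup := hP.1
    have hsnd : s.Nodup := hsub.nodup hS
    refine ⟨⟨hP, hsub⟩, hP, ?_⟩
    rintro ⟨v1, v2, v3⟩ htN hvt
    have hv13 : [v1, v3].Sublist s := hN _ htN
    have hv1s : v1 ∈ s := hv13.subset (by simp)
    have hv3s : v3 ∈ s := hv13.subset (by simp)
    have hvt' : [v1, v2, v3].Sublist S := hvt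
    have h12 : [v1, v2].Sublist S :=
      (((List.nil_sublist [v3]).cons₂ v2).cons₂ v1).trans hvt'
    have h23 : [v2, v3].Sublist S := (List.sublist_cons_self v1 _).trans hvt'
    have hv2S : v2 ∈ S := h12.subset (by simp)
    by_cases hv2s : v2 ∈ s
    · have h12s : [v1, v2].Sublist s := pair_transfer hsub hS hv1s hv2s h12
      have h23s : [v2, v3].Sublist s := pair_transfer hsub hS hv2s hv3s h23
      exact hok _ htN (chain3 hsnd h12s h23s)
    · have hv1p : v1 ∈ prevList v2 s S := (mem_prevList hS hv2S).mpr ⟨hv1s, h12⟩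
      obtain ⟨hps, hpv, hle⟩ := prev_spec hS hv2S hv2s hv1p
      set p := prev v2 s S with hpdef
      refine hforb v2 hv2S hv2s ⟨(v1, v2, v3), htN, rfl, ?_, ?_⟩
      · -- preceq v1 p s
        rcases hle with h | h
        · exact Or.inl h
        · exact Or.inr (pair_transfer hsub hS hv1s hps h)
      · -- prec p v3 s
        have h23' : [p, v2, v3].Sublist S := chain3 hS hpv h23
        have hpv3 : [p, v3].Sublist S :=
          (((List.Sublist.refl [v3]).cons v2).cons₂ p).trans h23'
        exact pair_transfer hsub hS hps hv3s hpv3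
end

section
/- Let s and S be duplicate-free lists with s a subsequence of S and with the same first element. Let v be an element of S that does not occur in s, and let a and b be elements occurring in s. Then [a, v, b] is a sublist of S if and only if a ⪯_s prev(v, s, S) and prev(v, s, S) ≺_s b. -/
variable {V : Type*}

/-- In a nodup list, a pair sublist has increasing indices. -/
lemma aux_pair_indexOf [DecidableEq V] {S : List V} (hS : S.Nodup) {x y : V}
    (h : [x, y].Sublist S) : S.idxOf x < S.idxOf y := by
  induction S with
  | nil => simp at h
  | cons c T IH =>
    have hcT : c ∉ T := (List.nodup_cons.mp hS).1
    have hT : T.Nodup := (List.nodup_cons.mp hS).2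
    cases h with
    | cons _ h' =>
      have hx : x ∈ T := h'.subset (by simp)
      have hy : y ∈ T := h'.subset (by simp)
      have hxc : c ≠ x := fun e => hcT (e ▸ hx)
      have hyc : c ≠ y := fun e => hcT (e ▸ hy)
      rw [List.idxOf_cons_ne _ hxc, List.idxOf_cons_ne _ hyc]
      exact Nat.succ_lt_succ (IH hT h')
    | cons_cons _ h' =>
      have hy : y ∈ T := List.singleton_sublist.mp h'
      have hyc : x ≠ y := fun e => hcT (e ▸ hy)
      rw [List.idxOf_cons_self, List.idxOf_cons_ne _ hyc]
      exact Nat.succ_pos _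
  
/-- Totality of precedence for distinct members. -/
lemma aux_total {s : List V} {x y : V} (hx : x ∈ s) (hy : y ∈ s) (hne : x ≠ y) :
    [x, y].Sublist s ∨ [y, x].Sublist s := by
  induction s with
  | nil => simp at hx
  | cons c t IH =>
    by_cases hxc : x = c
    · subst hxc
      have : y ∈ t := by
        rcases List.mem_cons.mp hy with h | h
        · exact absurd h.symm hne
        · exact h
      exact Or.inl ((List.singleton_sublist.mpr this).cons₂ x)
    · by_cases hyc : y = c
      · subst hyc
        have : x ∈ t := by
          rcases List.mem_cons.mp hx with h | h
          · exact absurd h hxc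
          · exact h
        exact Or.inr ((List.singleton_sublist.mpr this).cons₂ y)
      · have hx' : x ∈ t := by
          rcases List.mem_cons.mp hx with h | h
          · exact absurd h hxc
          · exact h
        have hy' : y ∈ t := by
          rcases List.mem_cons.mp hy with h | h
          · exact absurd h hyc
          · exact h
        rcases IH hx' hy' with h | h
        · exact Or.inl (h.cons c)
        · exact Or.inr (h.cons c)

/-- A list of members of `S` sorted by index is a sublist of `S`. -/
lemma aux_sorted_sublist [DecidableEq V] {S : List V} :
    ∀ l : List V, (∀ x ∈ l, x ∈ S) →
      l.Pairwise (fun x y => S.idxOf x < S.idxOf y) → l.Sublist S := by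
  induction S with
  | nil =>
    intro l hl _
    cases l with
    | nil => simp
    | cons x m => exact absurd (hl x (by simp)) (by simp)
  | cons c T IH =>
    intro l hl hp
    cases l with
    | nil => simp
    | cons x m =>
      rw [List.pairwise_cons] at hp
      obtain ⟨hhead, hm⟩ := hp
      by_cases hxc : x = c
      · subst hxc
        refine List.Sublist.cons₂ x (IH m ?_ ?_)
        · intro y hy
          have hyx : y ≠ x := by
            intro e
            have := hhead y hy
            simp [e] at this
          have : y ∈ x :: T := hl y (by simp [hy])
          rcases List.mem_cons.mp this with h | h
          · exact absurd h hyx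
          · exact h
        · refine hm.imp_of_mem ?_
          intro y z hy hz hlt
          have hyx : x ≠ y := by
            intro e
            have := hhead y hy
            simp [← e] at this
          have hzx : x ≠ z := by
            intro e
            have := hhead z hz
            have h2 := hhead y hy
            rw [← e, List.idxOf_cons_self] at this
            omega
          rw [List.idxOf_cons_ne _ hyx, List.idxOf_cons_ne _ hzx] at hlt
          omega
      · have hall : ∀ y ∈ x :: m, y ≠ c := by
          intro y hy
          rcases List.mem_cons.mp hy with h | h
          · exact h ▸ hxc
          · intro e
            have h1 := hhead y h
            have hx1 : c ≠ x := fun e2 => hxc e2.symm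
            rw [List.idxOf_cons_ne _ hx1, e, List.idxOf_cons_self] at h1
            omega
        refine List.Sublist.cons c (IH (x :: m) ?_ ?_)
        · intro y hy
          have : y ∈ c :: T := hl y hy
          rcases List.mem_cons.mp this with h | h
          · exact absurd h (hall y hy)
          · exact h
        · refine (List.pairwise_cons.mpr ⟨hhead, hm⟩).imp_of_mem ?_
          intro y z hy hz hlt
          have h1 : c ≠ y := fun e => (hall y hy) e.symm
          have h2 : c ≠ z := fun e => (hall z hz) e.symm
          rw [List.idxOf_cons_ne _ h1, List.idxOf_cons_ne _ h2] at hlt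
          omega

/-- `prec` in a sublist `s` of nodup `S` is equivalent to index comparison in `S`. -/
lemma aux_prec_iff [DecidableEq V] {s S : List V} (hS : S.Nodup) (hsub : s.Sublist S)
    {x y : V} (hx : x ∈ s) (hy : y ∈ s) :
    prec x y s ↔ S.idxOf x < S.idxOf y := by
  constructor
  · intro h
    exact aux_pair_indexOf hS (h.trans hsub)
  · intro h
    have hne : x ≠ y := by
      intro e; rw [e] at h; omega
    rcases aux_total hx hy hne with h' | h'
    · exact h'
    · have := aux_pair_indexOf hS (h'.trans hsub)
      omega

/-- Membership in the `takeWhile (· ≠ v)` prefix. -/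
lemma aux_mem_takeWhile [DecidableEq V] {v x : V} {S : List V} (hv : v ∈ S) :
    x ∈ S.takeWhile (· ≠ v) ↔ x ∈ S ∧ S.idxOf x < S.idxOf v := by
  induction S with
  | nil => simp at hv
  | cons c T IH =>
    rw [List.takeWhile_cons]
    by_cases hcv : c = v
    · subst hcv
      simp [List.idxOf_cons_self]
    · have hvT : v ∈ T := by
        rcases List.mem_cons.mp hv with h | h
        · exact absurd h.symm hcv
        · exact h
      have hcv' : c ≠ v := hcv
      rw [if_pos (by simp [hcv])]
      by_cases hxc : x = c
      · subst hxc
        rw [List.idxOf_cons_self, List.idxOf_cons_ne _ hcv']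
        simp
      · have hxc' : c ≠ x := fun e => hxc e.symm
        rw [List.mem_cons, List.mem_cons]
        rw [List.idxOf_cons_ne _ hxc', List.idxOf_cons_ne _ hcv']
        simp only [hxc, false_or]
        rw [IH hvT]
        constructor
        · rintro ⟨h1, h2⟩
          exact ⟨h1, by omega⟩
        · rintro ⟨h1, h2⟩
          exact ⟨h1, by omega⟩

lemma aux_mem_prevList [DecidableEq V] {v x : V} {s S : List V} (hv : v ∈ S) :
    x ∈ prevList v s S ↔ x ∈ s ∧ x ∈ S ∧ S.idxOf x < S.idxOf v := by
  unfold prevList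
  rw [List.mem_filter]
  rw [aux_mem_takeWhile hv]
  simp only [decide_eq_true_eq]
  tauto

theorem between_iff_prev [DecidableEq V] (s S : List V)
    (hs : s.Nodup) (hS : S.Nodup) (hsub : s.Sublist S)
    (hhead : s.head? = S.head?)
    (v : V) (hv : v ∈ S) (hvs : v ∉ s)
    (a b : V) (ha : a ∈ s) (hb : b ∈ s) :
    [a, v, b].Sublist S ↔ preceq a (prev v s S) s ∧ prec (prev v s S) b s := by
  have hSne : S ≠ [] := List.ne_nil_of_mem hv
  have hsne : s ≠ [] := List.ne_nil_of_mem ha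
  have hcS : S.head hSne ∈ s := by
    have h1 : s.head hsne = S.head hSne := by
      rw [List.head?_eq_head hsne, List.head?_eq_head hSne] at hhead
      exact Option.some.inj hhead
    rw [← h1]; exact List.head_mem hsne
  set t' := prevList v s S with ht'def
  have ht'S : t'.Sublist S := List.filter_sublist.trans (List.takeWhile_sublist _)
  have hmem' : ∀ x, x ∈ t' ↔ x ∈ s ∧ x ∈ S ∧ S.idxOf x < S.idxOf v :=
    fun x => aux_mem_prevList hv
  have ht'ne : t' ≠ [] := by
    have hhd : S.head hSne ∈ t' := by
      refine (hmem' _).mpr ⟨hcS, List.head_mem hSne, ?_⟩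
      obtain ⟨c, T, hcT⟩ := List.exists_cons_of_ne_nil hSne
      have hvh : c ≠ v := by
        intro e
        exact hvs (by subst hcT; simpa [e] using hcS)
      subst hcT
      simp [List.idxOf_cons_self, List.idxOf_cons_ne _ hvh]
    intro e; rw [e] at hhd; simp at hhd
  have hp_def : prev v s S = t'.getLast ht'ne := by
    unfold prev
    rw [if_neg hvs, ← ht'def, List.getLastD_eq_getLast?, List.getLast?_eq_getLast ht'ne]
    rfl
  set p := t'.getLast ht'ne with hpdef
  have hpt' : p ∈ t' := List.getLast_mem ht'ne
  have hps : p ∈ s := ((hmem' p).mp hpt').1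
  have hpv : S.idxOf p < S.idxOf v := ((hmem' p).mp hpt').2.2
  have hmax : ∀ x ∈ s, S.idxOf x < S.idxOf v → S.idxOf x ≤ S.idxOf p := by
    intro x hxs hxv
    have hxt' : x ∈ t' := (hmem' x).mpr ⟨hxs, hsub.subset hxs, hxv⟩
    by_cases hxp : x = p
    · simp [hxp]
    · have heq := List.dropLast_append_getLast ht'ne
      have hxd : x ∈ t'.dropLast := by
        rw [← heq] at hxt'
        rcases List.mem_append.mp hxt' with h | h
        · exact h
        · simp at h; exact absurd h hxp
      have hsl : [x, p].Sublist t' := by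
        conv_rhs => rw [← heq]
        exact List.Sublist.append (List.singleton_sublist.mpr hxd) (List.Sublist.refl [p])
      exact Nat.le_of_lt (aux_pair_indexOf hS (hsl.trans ht'S))
  rw [hp_def]
  constructor
  · intro h
    have hav : S.idxOf a < S.idxOf v :=
      aux_pair_indexOf hS ((((List.nil_sublist [b]).cons₂ v).cons₂ a).trans h)
    have hvb : S.idxOf v < S.idxOf b :=
      aux_pair_indexOf hS (((List.Sublist.refl [v, b]).cons a).trans h)
    have hap : S.idxOf a ≤ S.idxOf p := hmax a ha hav
    refine ⟨?_, (aux_prec_iff hS hsub hps hb).mpr (hpv.trans hvb)⟩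
    by_cases hapx : a = p
    · exact Or.inl hapx
    · right
      apply (aux_prec_iff hS hsub ha hps).mpr
      have : S.idxOf a ≠ S.idxOf p := fun e =>
        hapx ((List.idxOf_inj (hsub.subset ha)).mp e)
      omega
  · rintro ⟨h1, h2⟩
    have hpb : S.idxOf p < S.idxOf b := (aux_prec_iff hS hsub hps hb).mp h2
    have hap : S.idxOf a ≤ S.idxOf p := by
      rcases h1 with rfl | h1
      · exact le_refl _
      · exact le_of_lt ((aux_prec_iff hS hsub ha hps).mp h1)
    have hvb : S.idxOf v < S.idxOf b := by
      have hbv : b ≠ v := fun e => hvs (e ▸ hb)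
      have hne : S.idxOf b ≠ S.idxOf v := fun e =>
        hbv ((List.idxOf_inj (hsub.subset hb)).mp e)
      by_contra hcon
      push_neg at hcon
      have : S.idxOf b < S.idxOf v := by omega
      have := hmax b hb this
      omega
    refine aux_sorted_sublist [a, v, b] ?_ ?_
    · intro x hx
      simp only [List.mem_cons, List.not_mem_nil, or_false] at hx
      rcases hx with rfl | rfl | rfl
      · exact hsub.subset ha
      · exact hv
      · exact hsub.subset hb
    · simp only [List.pairwise_cons, List.mem_cons, List.not_mem_nil, or_false,
        forall_eq_or_imp, forall_eq, List.Pairwise.nil, and_true, IsEmpty.forall_iff,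
        implies_true]
      refine ⟨⟨by omega, by omega⟩, by omega⟩
end

section
/- Let s be a duplicate-free list and N̂ a set of NotBetween triples such that every (v1, v2, v3) ∈ N̂ satisfies v1 ≺_s v3. Let v1* occur in s, let v2* not occur in s, and let s' be obtained from s by inserting v2* immediately after v1* (i.e., s = s1 ++ [v1*] ++ s2 and s' = s1 ++ [v1*, v2*] ++ s2). Then F(s', N̂) = F(s, N̂) ∪ {(v2*, w) | (v1*, w) ∈ F(s, N̂)}. -/
variable {V : Type*}

theorem pair_sublist_append {a b : V} {l1 l2 : List V} :
    [a,b].Sublist (l1++l2) ↔ [a,b].Sublist l1 ∨ [a,b].Sublist l2 ∨ (a ∈ l1 ∧ b ∈ l2) := by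
  rw [List.sublist_append_iff]
  constructor
  · rintro ⟨u, v, huv, hu, hv⟩
    match u, huv with
    | [], huv =>
      obtain rfl : v = [a, b] := by simpa [eq_comm] using huv
      exact Or.inr (Or.inl hv)
    | [x], huv =>
      obtain ⟨rfl, rfl⟩ : x = a ∧ v = [b] := by simpa [eq_comm] using huv
      exact Or.inr (Or.inr ⟨List.singleton_sublist.mp hu, List.singleton_sublist.mp hv⟩)
    | [x, y], huv =>
      obtain ⟨rfl, rfl, rfl⟩ : x = a ∧ y = b ∧ v = [] := by simpa [eq_comm] using huv
      exact Or.inl hu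
    | x :: y :: z :: u, huv => simp at huv
  · rintro (h | h | ⟨h1, h2⟩)
    · exact ⟨[a,b], [], by simp, h, by simp⟩
    · exact ⟨[], [a,b], by simp, by simp, h⟩
    · exact ⟨[a], [b], by simp, by simpa, by simpa⟩

theorem pair_sublist_cons {a b c : V} {l : List V} :
    [a,b].Sublist (c :: l) ↔ (a = c ∧ b ∈ l) ∨ [a,b].Sublist l := by
  have := pair_sublist_append (a := a) (b := b) (l1 := [c]) (l2 := l)
  simp only [List.singleton_append] at this
  rw [this]
  have h2 : ¬ [a,b].Sublist [c] := fun h => by simpa using h.length_le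
  simp [h2]
  tauto

theorem forb_after_insert (s1 s2 : List V) (v1 v2 : V)
    (hnd : (s1 ++ [v1] ++ s2).Nodup) (hv2 : v2 ∉ s1 ++ [v1] ++ s2)
    (N : Set (V × V × V))
    (hN : ∀ t ∈ N, prec t.1 t.2.2 (s1 ++ [v1] ++ s2)) :
    Forb (s1 ++ [v1, v2] ++ s2) N =
      Forb (s1 ++ [v1] ++ s2) N ∪
        {p : V × V | p.1 = v2 ∧ (v1, p.2) ∈ Forb (s1 ++ [v1] ++ s2) N} := by
  classical
  set s := s1 ++ [v1] ++ s2 with hs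
  set s' := s1 ++ [v1, v2] ++ s2 with hs'
  have hv2s1 : v2 ∉ s1 := fun h => hv2 (by simp [hs, h])
  have hv2v1 : v2 ≠ v1 := fun h => hv2 (by simp [hs, h])
  have hv2s2 : v2 ∉ s2 := fun h => hv2 (by simp [hs, h])
  have hv1s1 : v1 ∉ s1 := by simp [hs, List.nodup_append] at hnd; exact fun h => (hnd.2.2 v1 h).1 rfl
  have hv1s2 : v1 ∉ s2 := by simp [hs, List.nodup_append] at hnd; tauto
  -- normal forms
  have hs'e : s' = s1 ++ (v1 :: v2 :: s2) := by simp [hs']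
  have hse : s = s1 ++ (v1 :: s2) := by simp [hs]
  have hss : s.Sublist s' := by
    rw [hse, hs'e]
    exact ((List.sublist_cons_self v2 s2).cons₂ v1).append_left s1
  have mems : ∀ a : V, a ∈ s ↔ (a ∈ s1 ∨ a = v1 ∨ a ∈ s2) := by
    intro a; simp [hse]
  have hne : ∀ a : V, a ∈ s → a ≠ v2 := by
    rintro a ha rfl; exact hv2 ha
  -- e1
  have e1 : ∀ a : V, prec a v1 s ↔ a ∈ s1 := by
    intro a
    rw [hse]
    constructor
    · intro h
      rcases pair_sublist_append.mp h with h | h | ⟨ha, _⟩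
      · exact absurd (h.subset (by simp)) hv1s1
      · rcases pair_sublist_cons.mp h with ⟨_, hb⟩ | h
        · exact absurd hb hv1s2
        · exact absurd (h.subset (by simp)) hv1s2
      · exact ha
    · intro ha
      exact pair_sublist_append.mpr (Or.inr (Or.inr ⟨ha, by simp⟩))
  -- e2
  have e2 : ∀ b : V, prec v1 b s ↔ b ∈ s2 := by
    intro b
    rw [hse]
    constructor
    · intro h
      rcases pair_sublist_append.mp h with h | h | ⟨ha, _⟩
      · exact absurd (h.subset (by simp)) hv1s1
      · rcases pair_sublist_cons.mp h with ⟨_, hb⟩ | h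
        · exact hb
        · exact absurd (h.subset (by simp)) hv1s2
      · exact absurd ha hv1s1
    · intro hb
      exact pair_sublist_append.mpr (Or.inr (Or.inl (pair_sublist_cons.mpr (Or.inl ⟨rfl, hb⟩))))
  -- e3
  have e3 : ∀ a : V, prec a v2 s' ↔ (a = v1 ∨ a ∈ s1) := by
    intro a
    rw [hs'e]
    constructor
    · intro h
      rcases pair_sublist_append.mp h with h | h | ⟨ha, _⟩
      · exact absurd (h.subset (by simp)) hv2s1
      · rcases pair_sublist_cons.mp h with ⟨he, _⟩ | h
        · exact Or.inl he
        · rcases pair_sublist_cons.mp h with ⟨_, hb⟩ | h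
          · exact absurd hb hv2s2
          · exact absurd (h.subset (by simp)) hv2s2
      · exact Or.inr ha
    · rintro (rfl | ha)
      · exact pair_sublist_append.mpr (Or.inr (Or.inl (pair_sublist_cons.mpr (Or.inl ⟨rfl, by simp⟩))))
      · exact pair_sublist_append.mpr (Or.inr (Or.inr ⟨ha, by simp⟩))
  -- e4
  have e4 : ∀ b : V, b ≠ v2 → (prec v2 b s' ↔ b ∈ s2) := by
    intro b hb
    rw [hs'e]
    constructor
    · intro h
      rcases pair_sublist_append.mp h with h | h | ⟨ha, _⟩
      · exact absurd (h.subset (by simp)) hv2s1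
      · rcases pair_sublist_cons.mp h with ⟨he, _⟩ | h
        · exact absurd he hv2v1
        · rcases pair_sublist_cons.mp h with ⟨_, hb2⟩ | h
          · exact hb2
          · exact absurd (h.subset (by simp)) hv2s2
      · exact absurd ha hv2s1
    · intro hb2
      exact pair_sublist_append.mpr (Or.inr (Or.inl (pair_sublist_cons.mpr (Or.inr
        (pair_sublist_cons.mpr (Or.inl ⟨rfl, hb2⟩))))))
  -- hA
  have hA : ∀ a b : V, a ≠ v2 → b ≠ v2 → (prec a b s' ↔ prec a b s) := by
    intro a b ha hb
    constructor
    · intro h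
      have h2 := h.erase v2
      rwa [List.erase_of_not_mem (by simp [Ne.symm ha, Ne.symm hb]),
        show s'.erase v2 = s by
          rw [hs'e, List.erase_append_right _ hv2s1, hse,
            List.erase_cons_tail (by simp [Ne.symm hv2v1]), List.erase_cons_head]] at h2
    · intro h
      exact h.trans hss

  have hD : ¬ prec v2 v2 s' := by
    intro h
    rcases (e3 v2).mp h with h | h
    · exact hv2v1 h
    · exact hv2s1 h
  -- main proof
  ext ⟨x, w⟩
  simp only [Forb, Set.mem_union, Set.mem_setOf_eq]
  constructor
  · rintro ⟨t, htN, h1, hpe, hp⟩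
    have ht1 : t.1 ∈ s := (hN t htN).subset (by simp)
    have ht3 : t.2.2 ∈ s := (hN t htN).subset (by simp)
    have ht1ne : t.1 ≠ v2 := hne _ ht1
    have ht3ne : t.2.2 ≠ v2 := hne _ ht3
    by_cases hx : x = v2
    · subst hx
      refine Or.inr ⟨rfl, t, htN, h1, ?_, ?_⟩
      · rcases hpe with rfl | hpe
        · exact absurd rfl ht1ne
        · rcases (e3 t.1).mp hpe with h | h
          · exact Or.inl h
          · exact Or.inr ((e1 t.1).mpr h)
      · exact (e2 t.2.2).mpr ((e4 t.2.2 ht3ne).mp hp)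
    · refine Or.inl ⟨t, htN, h1, ?_, (hA x t.2.2 hx ht3ne).mp hp⟩
      rcases hpe with rfl | hpe
      · exact Or.inl rfl
      · exact Or.inr ((hA t.1 x ht1ne hx).mp hpe)
  · rintro (⟨t, htN, h1, hpe, hp⟩ | ⟨rfl, t, htN, h1, hpe, hp⟩)
    · refine ⟨t, htN, h1, ?_, hp.trans hss⟩
      rcases hpe with rfl | hpe
      · exact Or.inl rfl
      · exact Or.inr (hpe.trans hss)
    · refine ⟨t, htN, h1, Or.inr ?_, ?_⟩
      · refine (e3 t.1).mpr ?_
        rcases hpe with rfl | hpe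
        · exact Or.inl rfl
        · exact Or.inr ((e1 t.1).mp hpe)
      · have ht3 : t.2.2 ∈ s := (hN t htN).subset (by simp)
        exact (e4 t.2.2 (hne _ ht3)).mpr ((e2 t.2.2).mp hp)
end

section
/- Let s be a duplicate-free list and N̂ a set of NotBetween triples such that every (v1, v2, v3) ∈ N̂ satisfies v1 ≺_s v3, and suppose s violates no triple of N̂. Let vi occur in s, let vj not occur in s, and let s' be obtained from s by inserting vj immediately after vi. Then s' violates some triple of N̂ if and only if (vi, vj) ∈ F(s, N̂). -/
variable {V : Type*}

private lemma sublist_of_notMem_head {l r : List V} {a : V}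
    (h : l.Sublist (a :: r)) (hm : a ∉ l) : l.Sublist r := by
  cases h with
  | cons _ h => exact h
  | cons_cons _ h => simp at hm

theorem insert_violates_iff_forbidden (s1 s2 : List V) (vi vj : V)
    (hnd : (s1 ++ [vi] ++ s2).Nodup) (hvj : vj ∉ s1 ++ [vi] ++ s2)
    (N : Set (V × V × V))
    (hN : ∀ t ∈ N, prec t.1 t.2.2 (s1 ++ [vi] ++ s2))
    (hok : ∀ t ∈ N, ¬ violates (s1 ++ [vi] ++ s2) t) :
    (∃ t ∈ N, violates (s1 ++ [vi, vj] ++ s2) t) ↔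
      (vi, vj) ∈ Forb (s1 ++ [vi] ++ s2) N := by
  have hvi1 : vi ∉ s1 := by
    simp [List.nodup_append] at hnd; exact fun h => (hnd.2.2 vi h).1 rfl
  have hvi2 : vi ∉ s2 := by
    simp [List.nodup_append] at hnd; tauto
  have hvj1 : vj ∉ s1 := fun h => hvj (by simp [h])
  have hvj2 : vj ∉ s2 := fun h => hvj (by simp [h])
  have hvjvi : vj ≠ vi := fun h => hvj (by simp [h])
  constructor
  · rintro ⟨t, htN, hviol⟩
    obtain ⟨t1, t2, t3⟩ := t
    have h13 : prec t1 t3 (s1 ++ [vi] ++ s2) := hN _ htN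
    have ht1s : t1 ∈ s1 ++ [vi] ++ s2 := h13.subset (by simp)
    have ht3s : t3 ∈ s1 ++ [vi] ++ s2 := h13.subset (by simp)
    -- t2 must be vj
    have ht2 : t2 = vj := by
      by_contra hne
      apply hok _ htN
      unfold violates at hviol ⊢
      simp only at hviol ⊢
      have h' : ([t1, t2, t3] : List V).Sublist ((s1 ++ [vi]) ++ vj :: s2) := by
        simpa using hviol
      have hvjmem : vj ∉ ([t1, t2, t3] : List V) := by
        simp only [List.mem_cons, List.not_mem_nil]
        rintro (h | h | h | h)
        · exact hvj (h ▸ ht1s)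
        · exact hne h.symm
        · exact hvj (h ▸ ht3s)
        · exact h.elim
      rw [List.sublist_append_iff] at h'
      obtain ⟨l1, l2, heq, hl1, hl2⟩ := h'
      have hl2' : l2.Sublist s2 := sublist_of_notMem_head hl2
        (fun hm => hvjmem (heq ▸ List.mem_append_right _ hm))
      have : ([t1, t2, t3] : List V).Sublist ((s1 ++ [vi]) ++ s2) := by
        rw [heq]; exact hl1.append hl2'
      simpa using this
    rw [ht2] at hviol
    -- decompose [t1, vj, t3] <+ (s1 ++ [vi]) ++ vj :: s2
    have hviol' : ([t1, vj, t3] : List V).Sublist ((s1 ++ [vi]) ++ vj :: s2) := by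
      simpa [violates] using hviol
    rw [List.sublist_append_iff] at hviol'
    obtain ⟨l1, l2, heq, hl1, hl2⟩ := hviol'
    have hvjl1 : vj ∉ l1 := fun hm => by
      have := hl1.subset hm
      simp at this
      rcases this with h | h
      · exact hvj1 h
      · exact hvjvi h
    have hkey : t1 ∈ s1 ++ [vi] ∧ t3 ∈ s2 := by
      cases l1 with
      | nil =>
        exfalso
        simp only [List.nil_append] at heq
        rw [← heq] at hl2
        cases hl2 with
        | cons _ h => exact hvj2 (h.subset (by simp))
        | cons_cons _ h =>
          -- here t1 has been unified with vj
          exact hvj ht1s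
      | cons a l1' =>
        have ha : a = t1 := by
          have := congrArg (fun l => l.head?) heq
          simpa using this.symm
        subst ha
        cases l1' with
        | nil =>
          have hl2e : l2 = [vj, t3] := by
            have := heq.symm
            simpa using this
          rw [hl2e] at hl2
          constructor
          · exact hl1.subset (by simp)
          · cases hl2 with
            | cons _ h => exact absurd (h.subset (by simp)) hvj2
            | cons_cons _ h => exact h.subset (by simp)
        | cons b l1'' =>
          exfalso
          have hb : b = vj := by
            have := congrArg (fun l => l.tail.head?) heq
            simpa using this.symm
          exact hvjl1 (by simp [hb])
    obtain ⟨ht1m, ht3s2⟩ := hkey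
    refine ⟨(t1, t2, t3), htN, ht2, ?_, ?_⟩
    · -- preceq t1 vi s
      rcases (by simpa using ht1m : t1 ∈ s1 ∨ t1 = vi) with h | h
      · right
        unfold prec
        have : ([t1, vi] : List V).Sublist (s1 ++ [vi]) :=
          ((List.singleton_sublist.mpr h).append (List.Sublist.refl [vi]))
        exact this.trans (by simp)
      · left; exact h
    · unfold prec
      simp only
      have h' : ([vi, t3] : List V).Sublist (vi :: s2) :=
        (List.singleton_sublist.mpr ht3s2).cons₂ vi
      refine h'.trans ?_
      rw [List.append_assoc]
      exact List.sublist_append_right s1 (vi :: s2)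
  · rintro ⟨⟨t1, t2, t3⟩, htN, ht2, hpe, hpr⟩
    simp only at ht2 hpe hpr
    refine ⟨(t1, t2, t3), htN, ?_⟩
    -- t3 ∈ s2
    have ht3s2 : t3 ∈ s2 := by
      unfold prec at hpr
      rw [List.append_assoc, List.sublist_append_iff] at hpr
      obtain ⟨l1, l2, heq, hl1, hl2⟩ := hpr
      have hvil1 : vi ∉ l1 := fun hm => hvi1 (hl1.subset hm)
      cases l1 with
      | nil =>
        simp only [List.nil_append] at heq
        rw [← heq] at hl2
        cases hl2 with
        | cons _ h => exact absurd (h.subset (by simp)) hvi2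
        | cons_cons _ h => exact h.subset (by simp)
      | cons a l1' =>
        exfalso
        have ha : a = vi := by
          have := congrArg (fun l => l.head?) heq
          simpa using this.symm
        exact hvil1 (by simp [ha])
    unfold violates
    simp only [ht2]
    rcases hpe with h | h
    · -- t1 = vi
      rw [h]
      have h' : ([vi, vj, t3] : List V).Sublist (vi :: vj :: s2) :=
        ((List.singleton_sublist.mpr ht3s2).cons₂ vj).cons₂ vi
      refine h'.trans ?_
      rw [List.append_assoc]
      exact List.sublist_append_right s1 (vi :: vj :: s2)
    · -- t1 ≺ vi, so t1 ∈ s1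
      have ht1s1 : t1 ∈ s1 := by
        unfold prec at h
        rw [List.append_assoc, List.sublist_append_iff] at h
        obtain ⟨l1, l2, heq, hl1, hl2⟩ := h
        cases l1 with
        | nil =>
          exfalso
          simp only [List.nil_append] at heq
          rw [← heq] at hl2
          cases hl2 with
          | cons _ h2 => exact hvi2 (h2.subset (by simp))
          | cons_cons _ h2 =>
            exact hvi2 (h2.subset (by simp))
        | cons a l1' =>
          have ha : a = t1 := by
            have := congrArg (fun l => l.head?) heq
            simpa using this.symm
          subst ha
          cases l1' with
          | nil => exact hl1.subset (by simp)
          | cons b l1'' =>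
            exfalso
            have hb : b = vi := by
              have := congrArg (fun l => l.tail.head?) heq
              simpa using this.symm
            exact hvi1 (hl1.subset (by simp [hb]))
      have h1 : ([t1] : List V).Sublist s1 := List.singleton_sublist.mpr ht1s1
      have h2 : ([vj, t3] : List V).Sublist (vi :: vj :: s2) :=
        .cons vi ((List.singleton_sublist.mpr ht3s2).cons₂ vj)
      have := h1.append h2
      simpa using this
end

section
/- Let s be a duplicate-free list and N̂ a set of NotBetween triples such that every (v1, v2, v3) ∈ N̂ satisfies v1 ≺_s v3. Let vi occur in s, let vj not occur in s, and let s' be obtained from s by inserting vj immediately after vi. If (vi, vj) ∈ F(s, N̂), then D_S(s') ∩ D_N(N̂) = ∅, i.e., performing a forbidden insertion results in a domain wipeout. -/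
variable {V : Type*}

private lemma left_of_prec {x v : V} {l1 l2 : List V}
    (h : [x, v].Sublist (l1 ++ v :: l2)) (h1 : v ∉ l1) (h2 : v ∉ l2) : x ∈ l1 := by
  rw [List.sublist_append_iff] at h
  obtain ⟨p, q, hpq, hp, hq⟩ := h
  match p, q, hpq with
  | [], _, rfl =>
    cases hq with
    | cons _ h' => exact absurd (h'.subset (by simp)) h2
    | cons_cons _ h' => exact absurd (h'.subset (by simp)) h2
  | [x'], [v'], h =>
    simp at h
    obtain ⟨rfl, rfl⟩ := h
    exact hp.subset (by simp)
  | [x', v'], [], h =>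
    simp at h
    obtain ⟨rfl, rfl⟩ := h
    exact absurd (hp.subset (by simp)) h1

private lemma right_of_prec {v y : V} {l1 l2 : List V}
    (h : [v, y].Sublist (l1 ++ v :: l2)) (h1 : v ∉ l1) (h2 : v ∉ l2) : y ∈ l2 := by
  rw [List.sublist_append_iff] at h
  obtain ⟨p, q, hpq, hp, hq⟩ := h
  match p, q, hpq with
  | [], _, rfl =>
    cases hq with
    | cons _ h' => exact absurd (h'.subset (by simp)) h2
    | cons_cons _ h' => exact h'.subset (by simp)
  | [x'], [v'], h =>
    simp at h
    obtain ⟨rfl, rfl⟩ := h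
    exact absurd (hp.subset (by simp)) h1
  | [x', v'], [], h =>
    simp at h
    obtain ⟨rfl, rfl⟩ := h
    exact absurd (hp.subset (by simp)) h1

theorem forbidden_insertion_wipeout (a w : V) (haw : a ≠ w)
    (s1 s2 : List V) (vi vj : V)
    (hnd : (s1 ++ [vi] ++ s2).Nodup) (hvj : vj ∉ s1 ++ [vi] ++ s2)
    (N : Set (V × V × V))
    (hN : ∀ t ∈ N, prec t.1 t.2.2 (s1 ++ [vi] ++ s2))
    (hF : (vi, vj) ∈ Forb (s1 ++ [vi] ++ s2) N) :
    DS a w (s1 ++ [vi, vj] ++ s2) ∩ DN a w N = ∅ := by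
  -- vi occurs nowhere in s1 or s2
  have hvi1 : vi ∉ s1 := by
    intro h
    have h2 := List.Nodup.of_append_left hnd
    exact (List.nodup_append'.mp h2).2.2 h (by simp)
  have hvi2 : vi ∉ s2 := by
    intro h
    have := (List.nodup_append'.mp hnd).2.2
    exact this (by simp) h
  obtain ⟨⟨v1, v2, v3⟩, htN, hv2, hpre, hprec⟩ := hF
  simp only at hv2 hpre hprec
  subst hv2
  ext S
  simp only [Set.mem_inter_iff, Set.mem_empty_iff_false, iff_false]
  rintro ⟨⟨hSP, hsub⟩, -, hnoviol⟩
  apply hnoviol _ htN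
  -- v3 ∈ s2
  have hv3 : v3 ∈ s2 := right_of_prec (by simpa [prec] using hprec) hvi1 hvi2
  -- build the violating sublist [v1, v2, v3] of s1 ++ [vi, v2] ++ s2
  have key : [v1, v2, v3].Sublist (s1 ++ [vi, v2] ++ s2) := by
    rcases hpre with he | hp
    · -- v1 = vi
      rw [he]
      have : ([vi, v2] ++ [v3]).Sublist ([vi, v2] ++ s2) :=
        List.Sublist.append (List.Sublist.refl _)
          (by simpa using List.singleton_sublist.mpr hv3)
      have h2 : ([vi, v2] ++ s2).Sublist (s1 ++ ([vi, v2] ++ s2)) :=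
        List.sublist_append_right _ _
      simpa [List.append_assoc] using this.trans h2
    · have hv1 : v1 ∈ s1 := left_of_prec (by simpa [prec] using hp) hvi1 hvi2
      have : [v1] ++ [v2] ++ [v3] = [v1, v2, v3] := rfl
      rw [← this]
      refine List.Sublist.append (List.Sublist.append ?_ ?_) ?_
      · simpa using List.singleton_sublist.mpr hv1
      · simp
      · simpa using List.singleton_sublist.mpr hv3
  exact key.trans hsub
end

section
/- Let X be a set of nodes with α ∉ X and ω ∉ X. Then D_X(X) = D_N({(α, v, ω) | v ∈ X}); that is, a sequence from α to ω avoids every node of X if and only if it violates no NotBetween triple of the form (α, v, ω) with v ∈ X. -/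
variable {V : Type*}

/-- Excluded-nodes subdomain. -/
def DX (a w : V) (X : Set V) : Set (List V) := {S ∈ seqP a w | ∀ v ∈ X, v ∉ S}

theorem exclusion_as_notBetween (a w : V) (haw : a ≠ w)
    (X : Set V) (haX : a ∉ X) (hwX : w ∉ X) :
    DX a w X = DN a w {t : V × V × V | ∃ v ∈ X, t = (a, v, w)} := by
  ext S
  simp only [DX, DN, Set.mem_setOf_eq, Set.mem_sep_iff]
  refine and_congr_right fun hS => ?_
  constructor
  · rintro h t ⟨v, hv, rfl⟩ hviol
    exact h v hv (hviol.subset (by simp))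
  · intro h v hv hvS
    apply h (a, v, w) ⟨v, hv, rfl⟩
    obtain ⟨hnd, hhd, hlast⟩ := hS
    obtain ⟨T, rfl⟩ : ∃ T, S = a :: T := by
      cases S with
      | nil => simp at hhd
      | cons x T => simp only [List.head?_cons, Option.some.injEq] at hhd; exact ⟨T, by rw [hhd]⟩
    have hvT : v ∈ T := by
      rcases List.mem_cons.mp hvS with h1 | h1
      · exact absurd h1 (by rintro rfl; exact haX hv)
      · exact h1
    have hlastT : T.getLast? = some w := by
      cases T with
      | nil => simp at hlast; exact absurd hlast haw
      | cons b T' => rwa [List.getLast?_cons_cons] at hlast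
    have hTne : T ≠ [] := by rintro rfl; simp at hlastT
    obtain ⟨U, rfl⟩ : ∃ U, T = U ++ [w] := by
      rcases T.eq_nil_or_concat with rfl | ⟨U, b, rfl⟩
      · exact absurd rfl hTne
      · refine ⟨U, ?_⟩
        simp [List.getLast?_concat] at hlastT
        simp [hlastT]
    have hvU : v ∈ U := by
      rcases List.mem_append.mp hvT with h1 | h1
      · exact h1
      · exact absurd (by simpa using h1) (by rintro rfl; exact hwX hv)
    show ([a, v, w] : List V).Sublist (a :: (U ++ [w]))
    exact List.cons_sublist_cons.mpr
      ((List.singleton_sublist.mpr hvU).append (List.Sublist.refl [w]))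
end

section
/- Let d : V → V → ℝ satisfy the triangle inequality. If s and S are duplicate-free lists with the same (existing) first element and the same last element, and s is a subsequence of S, then pathLength(s) ≤ pathLength(S). In particular, the travel length of a partial sequence is a lower bound on the travel length of every sequence in D_S(s) with the same endpoints. -/
variable {V : Type*}

/-- The travel length of a path: sum of `d` over consecutive pairs. -/
def pathLength (d : V → V → ℝ) : List V → ℝ
  | a :: b :: rest => d a b + pathLength d (b :: rest)
  | _ => 0

private lemma aux_pathLength (d : V → V → ℝ)
    (htri : ∀ a b c : V, d a c ≤ d a b + d b c) :
    ∀ {s S : List V}, s.Sublist S → ∀ a : V, (a :: S).Nodup →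
      (a :: s).getLast? = (a :: S).getLast? →
      pathLength d (a :: s) ≤ pathLength d (a :: S) := by
  intro s S hsub
  induction hsub with
  | slnil => intro a _ _; exact le_refl _
  | @cons s S b h ih =>
    intro a hnd hlast
    match S, h with
    | [], h =>
      -- s must be [], and last equality forces a = b, contradicting nodup
      have hs : s = [] := List.sublist_nil.mp h
      subst hs
      simp [List.getLast?] at hlast
      simp [hlast] at hnd
    | c :: rest, h =>
      have hlast' : (a :: s).getLast? = (a :: c :: rest).getLast? := by
        rw [hlast]; simp [List.getLast?_cons_cons]
      have hnd' : (a :: c :: rest).Nodup := by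
        have := hnd
        simp_all [List.Nodup]
      have h1 := ih a hnd' hlast'
      refine le_trans h1 ?_
      show d a c + pathLength d (c :: rest) ≤
        d a b + (d b c + pathLength d (c :: rest))
      have := htri a b c
      linarith
  | @cons_cons s S c h ih =>
    intro a hnd hlast
    have hnd' : (c :: S).Nodup := by
      have := hnd; simp_all [List.Nodup]
    have hlast' : (c :: s).getLast? = (c :: S).getLast? := by
      rw [List.getLast?_cons_cons, List.getLast?_cons_cons] at hlast
      match s, S, hlast with
      | [], [], _ => rfl
      | [], y :: S, hl => simpa [List.getLast?] using hl
      | x :: s, [], hl => simpa [List.getLast?] using hl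
      | x :: s, y :: S, hl =>
        rw [List.getLast?_cons_cons, List.getLast?_cons_cons]; exact hl
    have h1 := ih c hnd' hlast'
    show d a c + pathLength d (c :: s) ≤ d a c + pathLength d (c :: S)
    linarith

theorem sublist_pathLength_le (d : V → V → ℝ)
    (htri : ∀ a b c : V, d a c ≤ d a b + d b c)
    (s S : List V) (hs : s.Nodup) (hS : S.Nodup) (hsub : s.Sublist S)
    (hne : s ≠ [])
    (hhead : s.head? = S.head?) (hlast : s.getLast? = S.getLast?) :
    pathLength d s ≤ pathLength d S := by
  match s, hne with
  | a :: s', _ =>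
    match S with
    | [] => exact absurd hsub (by simp)
    | b :: S' =>
      have hab : a = b := by simpa using hhead
      subst hab
      have hsub' : s'.Sublist S' := (List.cons_sublist_cons).mp hsub
      exact aux_pathLength d htri hsub' a hS hlast
end

section
/- Let d : V → V → ℝ satisfy the triangle inequality. Let s = s1 ++ [vi, vk] ++ s2 be a duplicate-free list in which vi and vk are consecutive, let vj be a node not occurring in s, and let s' = s1 ++ [vi, vj, vk] ++ s2 be the result of inserting vj between vi and vk. Then pathLength(s') = pathLength(s) + (d vi vj + d vj vk − d vi vk), and for every duplicate-free list S with the same first and last elements as s such that s' is a subsequence of S, pathLength(S) ≥ pathLength(s) + (d vi vj + d vj vk − d vi vk). -/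
variable {V : Type*}

private lemma cons_sublist_decomp : ∀ {r : List V} {a : V} {l : List V},
    (a :: l).Sublist r → ∃ r₁ r₂, r = r₁ ++ a :: r₂ ∧ l.Sublist r₂ := by
  intro r
  induction r with
  | nil => intro a l h; exact absurd h (by simp)
  | cons x r' ih =>
    intro a l h
    cases h with
    | cons _ h' =>
      obtain ⟨r₁, r₂, rfl, hsub⟩ := ih h'
      exact ⟨x :: r₁, r₂, rfl, hsub⟩
    | cons_cons _ h' => exact ⟨[], r', rfl, h'⟩

private lemma pathLength_append (d : V → V → ℝ) (l1 : List V) (m : V) (l2 : List V) :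
    pathLength d (l1 ++ m :: l2) = pathLength d (l1 ++ [m]) + pathLength d (m :: l2) := by
  induction l1 with
  | nil => simp [pathLength]
  | cons x l1 ih =>
    cases l1 with
    | nil => simp [pathLength]
    | cons y l1' =>
      simp only [List.cons_append, List.append_eq, pathLength] at *
      rw [ih]; ring

private lemma edge_le (d : V → V → ℝ) (htri : ∀ a b c : V, d a c ≤ d a b + d b c) :
    ∀ (L : List V) (a b : V), d a b ≤ pathLength d (a :: (L ++ [b])) := by
  intro L
  induction L with
  | nil => intro a b; simp [pathLength]
  | cons c L' ih =>
    intro a b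
    calc d a b ≤ d a c + d c b := htri a c b
    _ ≤ d a c + pathLength d (c :: (L' ++ [b])) := by linarith [ih c b]
    _ = pathLength d (a :: ((c :: L') ++ [b])) := by simp [pathLength]

private lemma key (d : V → V → ℝ) (htri : ∀ a b c : V, d a c ≤ d a b + d b c) :
    ∀ (l L : List V) (a b : V),
    (a :: (l ++ [b])).Sublist (a :: (L ++ [b])) →
    pathLength d (a :: (l ++ [b])) ≤ pathLength d (a :: (L ++ [b])) := by
  intro l
  induction l with
  | nil =>
    intro L a b _
    have : pathLength d (a :: ([] ++ [b])) = d a b := by simp [pathLength]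
    rw [this]; exact edge_le d htri L a b
  | cons c l' ih =>
    intro L a b h
    have h' : (c :: (l' ++ [b])).Sublist (L ++ [b]) :=
      List.cons_sublist_cons.mp
        (show (a :: (c :: (l' ++ [b]))).Sublist (a :: (L ++ [b])) by simpa using h)
    obtain ⟨P, Q, hEq, hsub⟩ := cons_sublist_decomp h'
    rcases Q.eq_nil_or_concat with rfl | ⟨Q', q, rfl⟩
    · exact absurd (List.eq_nil_of_sublist_nil hsub) (by simp)
    · have hEq2 : L ++ [b] = (P ++ c :: Q') ++ [q] := by
        simpa [List.concat_eq_append] using hEq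
      obtain ⟨rfl, hbq⟩ := List.append_inj' hEq2 (by simp)
      have hbq : b = q := by simpa using hbq
      subst hbq
      have hsub' : (c :: (l' ++ [b])).Sublist (c :: (Q' ++ [b])) := by
        apply List.cons_sublist_cons.mpr
        simpa [List.concat_eq_append] using hsub
      have hih := ih Q' c b hsub'
      have hedge := edge_le d htri P a c
      have e1 : pathLength d (a :: ((c :: l') ++ [b])) =
          d a c + pathLength d (c :: (l' ++ [b])) := by simp [pathLength]
      have e2 : pathLength d (a :: ((P ++ c :: Q') ++ [b])) =
          pathLength d (a :: (P ++ [c])) + pathLength d (c :: (Q' ++ [b])) := by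
        have : a :: ((P ++ c :: Q') ++ [b]) = (a :: P) ++ c :: (Q' ++ [b]) := by simp
        rw [this, pathLength_append d (a :: P) c (Q' ++ [b])]
        simp
      rw [e1, e2]
      have : d a c ≤ pathLength d (a :: (P ++ [c])) := hedge
      linarith

private lemma key2 (d : V → V → ℝ) (htri : ∀ a b c : V, d a c ≤ d a b + d b c)
    (l S : List V) (hsub : l.Sublist S) (hhead : l.head? = S.head?)
    (hlast : l.getLast? = S.getLast?) (hlen : 2 ≤ l.length) :
    pathLength d l ≤ pathLength d S := by
  -- decompose l = a :: l₁ ++ [b]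
  obtain ⟨a, l0, rfl⟩ : ∃ a l0, l = a :: l0 := by
    cases l with
    | nil => simp at hlen
    | cons a l0 => exact ⟨a, l0, rfl⟩
  rcases l0.eq_nil_or_concat with rfl | ⟨l₁, b, rfl⟩
  · simp at hlen
  obtain ⟨a', S0, rfl⟩ : ∃ a' S0, S = a' :: S0 := by
    cases S with
    | nil => exact absurd hsub (by simp)
    | cons a' S0 => exact ⟨a', S0, rfl⟩
  have ha : a = a' := by simpa using hhead
  subst ha
  rcases S0.eq_nil_or_concat with rfl | ⟨S₁, b', rfl⟩
  · have := List.Sublist.length_le hsub; simp at this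
  have hb : b = b' := by
    simp only [List.concat_eq_append] at hlast
    have h1 : (a :: (l₁ ++ [b])).getLast? = some b := by
      rw [show a :: (l₁ ++ [b]) = (a :: l₁) ++ [b] from rfl]
      exact List.getLast?_concat
    have h2 : (a :: (S₁ ++ [b'])).getLast? = some b' := by
      rw [show a :: (S₁ ++ [b']) = (a :: S₁) ++ [b'] from rfl]
      exact List.getLast?_concat
    rw [h1, h2] at hlast
    exact Option.some.inj hlast
  subst hb
  simp only [List.concat_eq_append] at hsub ⊢
  exact key d htri l₁ S₁ a b hsub

theorem insertion_detour_cost (d : V → V → ℝ)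
    (htri : ∀ a b c : V, d a c ≤ d a b + d b c)
    (s1 s2 : List V) (vi vj vk : V)
    (hnd : (s1 ++ [vi, vk] ++ s2).Nodup)
    (hvj : vj ∉ s1 ++ [vi, vk] ++ s2) :
    pathLength d (s1 ++ [vi, vj, vk] ++ s2) =
      pathLength d (s1 ++ [vi, vk] ++ s2) + (d vi vj + d vj vk - d vi vk) ∧
    ∀ S : List V, S.Nodup → (s1 ++ [vi, vj, vk] ++ s2).Sublist S →
      S.head? = (s1 ++ [vi, vk] ++ s2).head? →
      S.getLast? = (s1 ++ [vi, vk] ++ s2).getLast? →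
      pathLength d (s1 ++ [vi, vk] ++ s2) + (d vi vj + d vj vk - d vi vk) ≤
        pathLength d S := by
  have e1 : pathLength d (s1 ++ [vi, vj, vk] ++ s2) =
      pathLength d (s1 ++ [vi]) + (d vi vj + d vj vk) + pathLength d (vk :: s2) := by
    have h1 : s1 ++ [vi, vj, vk] ++ s2 = s1 ++ vi :: (vj :: vk :: s2) := by simp
    rw [h1, pathLength_append d s1 vi (vj :: vk :: s2)]
    simp [pathLength]; ring
  have e2 : pathLength d (s1 ++ [vi, vk] ++ s2) =
      pathLength d (s1 ++ [vi]) + d vi vk + pathLength d (vk :: s2) := by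
    have h1 : s1 ++ [vi, vk] ++ s2 = s1 ++ vi :: (vk :: s2) := by simp
    rw [h1, pathLength_append d s1 vi (vk :: s2)]
    simp [pathLength]; ring
  have epl : pathLength d (s1 ++ [vi, vj, vk] ++ s2) =
      pathLength d (s1 ++ [vi, vk] ++ s2) + (d vi vj + d vj vk - d vi vk) := by
    rw [e1, e2]; ring
  refine ⟨epl, ?_⟩
  intro S _ hsub hhead hlast
  rw [← epl]
  apply key2 d htri _ _ hsub
  · rw [hhead]; cases s1 <;> simp
  · rw [hlast]
    obtain ⟨y, hy⟩ := Option.isSome_iff_exists.mp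
      (List.getLast?_isSome.mpr (List.cons_ne_nil vk s2))
    rw [show s1 ++ [vi, vj, vk] ++ s2 = (s1 ++ [vi, vj]) ++ (vk :: s2) by simp,
        show s1 ++ [vi, vk] ++ s2 = (s1 ++ [vi]) ++ (vk :: s2) by simp,
        List.getLast?_append, List.getLast?_append, hy]
    simp [List.getLast?_append, hy]
  · simp
    omega
end

section
/- Let A be a finite set of activities, each i ∈ A having a start node sA i, an end node eA i, and a nonnegative load l i, and let c be a capacity. Let S be a duplicate-free list satisfying the cumulative condition: for every element v of S, the sum of l i over all i ∈ A with sA i ⪯_S v and v ≺_S eA i is at most c. If s is a subsequence of S, then for every element v of s, the sum of l i over the fully inserted activities straddling v in s — namely all i ∈ A such that sA i and eA i occur in s, sA i ⪯_s v, and v ≺_s eA i — is at most c. In other words, the load profile computed from the fully inserted activities is a valid lower bound in every completion of the partial sequence. -/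
variable {V : Type*} {I : Type*}

open scoped Classical in
theorem cumulative_load_profile_lower_bound
    (A : Finset I) (sA eA : I → V) (l : I → ℝ) (hl : ∀ i, 0 ≤ l i) (c : ℝ)
    (S : List V) (hS : S.Nodup)
    (hcum : ∀ v ∈ S,
      (∑ i ∈ A.filter (fun i => preceq (sA i) v S ∧ prec v (eA i) S), l i) ≤ c)
    (s : List V) (hsub : s.Sublist S) :
    ∀ v ∈ s,
      (∑ i ∈ A.filter (fun i =>
          sA i ∈ s ∧ eA i ∈ s ∧ preceq (sA i) v s ∧ prec v (eA i) s), l i) ≤ c := by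
  intro v hv
  refine le_trans ?_ (hcum v (hsub.subset hv))
  apply Finset.sum_le_sum_of_subset_of_nonneg
  · intro i hi
    simp only [Finset.mem_filter] at hi ⊢
    obtain ⟨hiA, _, _, hpe, hp⟩ := hi
    refine ⟨hiA, ?_, hp.trans hsub⟩
    rcases hpe with h | h
    · exact Or.inl h
    · exact Or.inr (h.trans hsub)
  · intro i _ _
    exact hl i
end

section
/- Let v be a node, let L1 and L2 be duplicate-free lists in which v does not occur, and let i1 ≤ length(L1) and i2 ≤ length(L2) be insertion positions. If inserting v at position i1 in L1 yields the same list as inserting v at position i2 in L2 (List.insertIdx), then L1 = L2 and i1 = i2. Consequently, the two-step node branching — which fixes a node and branches once on each of its feasible insertion positions — generates pairwise distinct sequences, so the corresponding search spaces are disjoint. -/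
variable {V : Type*}

theorem insertIdx_injective (v : V) (L1 L2 : List V)
    (h1 : L1.Nodup) (h2 : L2.Nodup)
    (hv1 : v ∉ L1) (hv2 : v ∉ L2)
    (i1 i2 : ℕ) (hi1 : i1 ≤ L1.length) (hi2 : i2 ≤ L2.length)
    (heq : L1.insertIdx i1 v = L2.insertIdx i2 v) :
    L1 = L2 ∧ i1 = i2 := by
  have hii : i1 = i2 := by
    rcases lt_trichotomy i1 i2 with h | h | h
    · exfalso
      have hl1 : i1 < L2.length := lt_of_lt_of_le h hi2
      have e1 : (L1.insertIdx i1 v)[i1]'(by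
          rw [List.length_insertIdx_of_le_length hi1]; omega) = v :=
        List.getElem_insertIdx_self _
      have e2 : (L2.insertIdx i2 v)[i1]'(by
          rw [List.length_insertIdx_of_le_length hi2]; omega) = L2[i1] :=
        List.getElem_insertIdx_of_lt h _
      have e3 := List.getElem_of_eq heq (i := i1) (by
          rw [List.length_insertIdx_of_le_length hi1]; omega)
      exact hv2 ((e1 ▸ e3.trans e2) ▸ List.getElem_mem hl1)
    · exact h
    · exfalso
      have hl1 : i2 < L1.length := lt_of_lt_of_le h hi1
      have e1 : (L2.insertIdx i2 v)[i2]'(by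
          rw [List.length_insertIdx_of_le_length hi2]; omega) = v :=
        List.getElem_insertIdx_self _
      have e2 : (L1.insertIdx i1 v)[i2]'(by
          rw [List.length_insertIdx_of_le_length hi1]; omega) = L1[i2] :=
        List.getElem_insertIdx_of_lt h _
      have e3 := List.getElem_of_eq heq.symm (i := i2) (by
          rw [List.length_insertIdx_of_le_length hi2]; omega)
      exact hv1 ((e1 ▸ e3.trans e2) ▸ List.getElem_mem hl1)
  refine ⟨?_, hii⟩
  have := congrArg (List.eraseIdx · i1) heq
  simpa [hii, List.eraseIdx_insertIdx_self] using this
end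

section
/- Let s be a sequence (a duplicate-free list with first element α and last element ω) that violates no NotBetween triple of N, let R be a set of required nodes each of which occurs in s, and let X be a set of nodes disjoint from the elements of s such that every node of V either occurs in s or belongs to X. Then D(R, X, s, N) = {s}; that is, the sequence domain is fixed with s as its unique element. -/
variable {V : Type*}

/-- Required-nodes subdomain. -/
def DR (a w : V) (R : Set V) : Set (List V) := {S ∈ seqP a w | ∀ v ∈ R, v ∈ S}

/-- The sequence domain. -/
def Dom (a w : V) (R X : Set V) (s : List V) (N : Set (V × V × V)) : Set (List V) :=
  DR a w R ∩ DX a w X ∩ DS a w s ∩ DN a w N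

theorem fixed_domain [Fintype V] (a w : V) (haw : a ≠ w)
    (s : List V) (hs : IsSeq a w s)
    (N : Set (V × V × V)) (hok : ∀ t ∈ N, ¬ violates s t)
    (R X : Set V)
    (hR : ∀ v ∈ R, v ∈ s) (hX : ∀ v ∈ X, v ∉ s)
    (hcover : ∀ v : V, v ∈ s ∨ v ∈ X) :
    Dom a w R X s N = {s} := by
  ext S
  simp only [Dom, DR, DX, DS, DN, seqP, Set.mem_inter_iff, Set.mem_setOf_eq,
    Set.mem_singleton_iff]
  constructor
  · rintro ⟨⟨⟨⟨hSseq, -⟩, ⟨-, hSX⟩⟩, -, hsub⟩, -⟩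
    have hsubset : S ⊆ s := fun v hv => (hcover v).resolve_right (fun hx => hSX v hx hv)
    have hle : S.length ≤ s.length := (List.subperm_of_subset hSseq.1 hsubset).length_le
    exact (hsub.eq_of_length (le_antisymm hsub.length_le hle)).symm
  · rintro rfl
    exact ⟨⟨⟨⟨hs, hR⟩, hs, hX⟩, hs, List.Sublist.refl _⟩, hs, hok⟩
end
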